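/- arXiv:1108.1596 — 2 statements merged into one kernel-verified Lean document; each statement's English description precedes it below -/
import Mathlib

section
/- In the free group F_2 on two generators, the number of words of length n over the 4 letters {a, b, a^{-1}, b^{-1}} that reduce to the identity has generating function R(z) = 3/(1 + 2√(1 − 12z²)). In particular, the number of trivial words of odd length is 0. -/
open Filter Topology

/-- Evaluation of a formal letter in the free group on two generators. -/
def f2Letter (p : Fin 2 × Bool) : FreeGroup (Fin 2) :=
  if p.2 then (FreeGroup.of p.1)⁻¹ else FreeGroup.of p.1

/-- The number of words of length `n` over the four letters `a, b, a⁻¹, b⁻¹`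
that reduce to the identity of the free group `F₂`. -/
noncomputable def f2TrivialCount (n : ℕ) : ℕ :=
  Nat.card {w : Fin n → Fin 2 × Bool //
    (List.ofFn fun i => f2Letter (w i)).prod = 1}

section Aux

open FreeGroup

abbrev A2 := Fin 2 × Bool

def rstep (x : A2) (t : List A2) : List A2 :=
  List.casesOn t [x] fun hd tl => if x.1 = hd.1 ∧ x.2 = !hd.2 then tl else x :: hd :: tl

lemma reduce_cons' (x : A2) (L : List A2) :
    reduce (x :: L) = rstep x (reduce L) := rfl

lemma reduce_tail {a : A2} {l : List A2} (h : reduce (a :: l) = a :: l) :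
    reduce l = l := by
  rw [reduce_cons'] at h
  rcases hl : reduce l with _ | ⟨hd, tl⟩
  · rw [hl] at h
    simp only [rstep] at h
    cases h
    rfl
  · rw [hl] at h
    simp only [rstep] at h
    split at h
    · exfalso
      have hle := FreeGroup.Red.length_le (reduce.red (L := l))
      rw [hl] at hle
      have h2 := congrArg List.length h
      simp at h2 hle
      omega
    · cases h
      rfl

lemma eq_inv_of_cancel {x hd : A2} (h1 : x.1 = hd.1) (h2 : x.2 = !hd.2) :
    hd = (x.1, !x.2) := by
  obtain ⟨a, b⟩ := hd
  obtain ⟨c, d⟩ := x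
  simp_all

lemma rstep_eq_nil_iff (x : A2) (t : List A2) :
    rstep x t = [] ↔ t = [(x.1, !x.2)] := by
  constructor
  · rcases t with _ | ⟨hd, tl⟩
    · intro h; simp [rstep] at h
    · simp only [rstep]
      split
      · rename_i hc
        intro h
        cases h
        obtain ⟨h1, h2⟩ := hc
        rw [eq_inv_of_cancel h1 h2]
      · intro h; cases h
  · intro h
    subst h
    simp [rstep]

lemma reduce_cons_of_ne {x y : A2} {s' : List A2} (hs : reduce (y :: s') = y :: s')
    (hxy : x ≠ y) :
    reduce ((x.1, !x.2) :: y :: s') = (x.1, !x.2) :: y :: s' := by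
  rw [reduce_cons', hs]
  simp only [rstep]
  split
  · rename_i hc
    exfalso
    apply hxy
    obtain ⟨a, b⟩ := x
    obtain ⟨c, d⟩ := y
    simp_all
  · rfl

lemma rstep_eq_cons_iff (x y : A2) (s' t : List A2) (hs : reduce (y :: s') = y :: s')
    (ht : reduce t = t) :
    rstep x t = y :: s' ↔ t = (if x = y then s' else (x.1, !x.2) :: y :: s') := by
  have hs' : reduce s' = s' := reduce_tail hs
  have hstep : rstep y s' = y :: s' := by
    conv_rhs => rw [← hs]
    rw [reduce_cons', hs']
  constructor
  · rcases t with _ | ⟨hd, tl⟩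
    · simp only [rstep]
      intro h
      injection h with h1 h2
      subst h1
      simp [← h2]
    · simp only [rstep]
      split
      · rename_i hc
        intro h
        subst h
        have hhd : hd = (x.1, !x.2) := eq_inv_of_cancel hc.1 hc.2
        subst hhd
        by_cases hxy : x = y
        · exfalso
          subst hxy
          rw [reduce_cons', hs] at ht
          simp only [rstep, and_self, if_true, Bool.not_not] at ht
          have := congrArg List.length ht
          simp at this
          omega
        · simp [hxy]
      · intro h
        injection h with h1 h2
        subst h1
        simp [← h2]
  · intro h
    by_cases hxy : x = y
    · subst hxy
      rw [if_pos rfl] at h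
      subst h
      exact hstep
    · rw [if_neg hxy] at h
      subst h
      simp [rstep]

/-- walks count on the 4-regular tree -/
def qfn : ℕ → ℕ → ℕ
  | 0, 0 => 1
  | 0, _ + 1 => 0
  | n + 1, 0 => 4 * qfn n 1
  | n + 1, d + 1 => qfn n d + 3 * qfn n (d + 2)

/-- number of words of length n reducing to s -/
def cnt (n : ℕ) (s : List A2) : ℕ :=
  Fintype.card {w : Fin n → A2 // reduce (List.ofFn w) = s}

lemma cnt_zero (s : List A2) : cnt 0 s = qfn 0 s.length := by
  rcases s with _ | ⟨y, s'⟩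
  · rw [cnt]
    have : ∀ w : Fin 0 → A2, reduce (List.ofFn w) = [] := by
      intro w; simp
    simp only [this, List.length_nil]
    rw [show qfn 0 0 = 1 from rfl]
    simp
  · rw [cnt]
    have : ∀ w : Fin 0 → A2, ¬ (reduce (List.ofFn w) = y :: s') := by
      intro w; simp
    simp [this, qfn]

lemma cnt_eq_q : ∀ n (s : List A2), reduce s = s → cnt n s = qfn n s.length := by
  intro n
  induction n with
  | zero => intro s _; exact cnt_zero s
  | succ n ih =>
    intro s hs
    have hcard : cnt (n + 1) s
        = ∑ x : A2, Fintype.card {w : Fin n → A2 // rstep x (reduce (List.ofFn w)) = s} := by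
      rw [cnt]
      have e1 : {w : Fin (n + 1) → A2 // reduce (List.ofFn w) = s}
          ≃ {p : A2 × (Fin n → A2) // rstep p.1 (reduce (List.ofFn p.2)) = s} := by
        refine (Equiv.subtypeEquiv (Fin.consEquiv (fun _ : Fin (n+1) => A2)).symm ?_)
        intro w
        have : List.ofFn w = w 0 :: List.ofFn (fun i => w i.succ) := List.ofFn_succ
        rw [this, reduce_cons']
        rfl
      rw [Fintype.card_congr e1,
        Fintype.card_congr (Equiv.subtypeProdEquivSigmaSubtype
          (fun (x : A2) (w : Fin n → A2) => rstep x (reduce (List.ofFn w)) = s)),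
        Fintype.card_sigma]
    rcases s with _ | ⟨y, s'⟩
    · rw [hcard]
      have hx : ∀ x : A2, Fintype.card {w : Fin n → A2 // rstep x (reduce (List.ofFn w)) = []}
          = qfn n 1 := by
        intro x
        have : ∀ w : Fin n → A2, (rstep x (reduce (List.ofFn w)) = [])
            ↔ reduce (List.ofFn w) = [(x.1, !x.2)] := fun w => rstep_eq_nil_iff x _
        rw [Fintype.card_congr (Equiv.subtypeEquivRight this)]
        have := ih [(x.1, !x.2)] (reduce_singleton _)
        simpa [cnt] using this
      simp only [hx, Finset.sum_const, Finset.card_univ]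
      have : Fintype.card A2 = 4 := by simp
      simp only [List.length_nil]
      rw [this, show qfn (n+1) 0 = 4 * qfn n 1 from rfl, smul_eq_mul]
    · rw [hcard]
      have hs' : reduce s' = s' := reduce_tail hs
      have hx : ∀ x : A2, Fintype.card {w : Fin n → A2 // rstep x (reduce (List.ofFn w)) = y :: s'}
          = if x = y then qfn n s'.length else qfn n (s'.length + 2) := by
        intro x
        have hiff : ∀ w : Fin n → A2, (rstep x (reduce (List.ofFn w)) = y :: s')
            ↔ reduce (List.ofFn w) = (if x = y then s' else (x.1, !x.2) :: y :: s') :=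
          fun w => rstep_eq_cons_iff x y s' _ hs (reduce.idem)
        rw [Fintype.card_congr (Equiv.subtypeEquivRight hiff)]
        by_cases hxy : x = y
        · rw [if_pos hxy, if_pos hxy]
          simpa [cnt] using ih s' hs'
        · rw [if_neg hxy, if_neg hxy]
          have := ih ((x.1, !x.2) :: y :: s') (reduce_cons_of_ne hs hxy)
          simpa [cnt] using this
      simp only [hx]
      have hmem : y ∈ (Finset.univ : Finset A2) := Finset.mem_univ y
      rw [← Finset.sum_erase_add _ _ hmem, if_pos rfl]
      have herase : ∑ x ∈ Finset.univ.erase y,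
          (if x = y then qfn n s'.length else qfn n (s'.length + 2))
          = 3 * qfn n (s'.length + 2) := by
        rw [Finset.sum_congr rfl (fun x hx => if_neg (Finset.ne_of_mem_erase hx))]
        rw [Finset.sum_const, Finset.card_erase_of_mem hmem]
        have : Fintype.card A2 = 4 := by simp
        simp [Finset.card_univ, this, Nat.smul_one_eq_cast]
      rw [herase]
      show _ = qfn (n + 1) (s'.length + 1)
      rw [show qfn (n+1) (s'.length+1) = qfn n s'.length + 3 * qfn n (s'.length+2) from rfl]
      ring

lemma f2Letter_eq_mk (a : A2) : f2Letter a = FreeGroup.mk [(a.1, !a.2)] := by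
  obtain ⟨i, b⟩ := a
  cases b
  · rfl
  · show (FreeGroup.of i)⁻¹ = _
    rw [FreeGroup.of, FreeGroup.inv_mk]
    rfl

lemma prod_map_mk (l : List A2) :
    (l.map (fun p : A2 => FreeGroup.mk [p])).prod = FreeGroup.mk l := by
  induction l with
  | nil => simp [← FreeGroup.one_eq_mk]
  | cons a t ih =>
    simp only [List.map_cons, List.prod_cons, ih, FreeGroup.mul_mk]
    rfl

lemma prod_eq_mk (n : ℕ) (w : Fin n → A2) :
    (List.ofFn fun i => f2Letter (w i)).prod
      = FreeGroup.mk (List.ofFn fun i => ((w i).1, !(w i).2)) := by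
  have h1 : (List.ofFn fun i => f2Letter (w i))
      = (List.ofFn fun i => ((w i).1, !(w i).2)).map (fun p : A2 => FreeGroup.mk [p]) := by
    rw [List.map_ofFn]
    congr 1
    funext i
    exact f2Letter_eq_mk (w i)
  rw [h1, prod_map_mk]

lemma trivial_iff (n : ℕ) (w : Fin n → A2) :
    (List.ofFn fun i => f2Letter (w i)).prod = 1
      ↔ reduce (List.ofFn fun i => ((w i).1, !(w i).2)) = [] := by
  rw [prod_eq_mk, ← FreeGroup.toWord_eq_nil_iff, FreeGroup.toWord_mk]

def invPerm : A2 ≃ A2 :=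
  Function.Involutive.toPerm (fun a => (a.1, !a.2)) (by intro a; simp)

lemma count_eq_q (n : ℕ) :
    Nat.card {w : Fin n → A2 //
      (List.ofFn fun i => f2Letter (w i)).prod = 1} = qfn n 0 := by
  rw [Nat.card_eq_fintype_card]
  have e : {w : Fin n → A2 // (List.ofFn fun i => f2Letter (w i)).prod = 1}
      ≃ {v : Fin n → A2 // reduce (List.ofFn v) = []} := by
    refine Equiv.subtypeEquiv (Equiv.arrowCongr (Equiv.refl (Fin n)) invPerm) ?_
    intro w
    rw [trivial_iff]
    rfl
  rw [Fintype.card_congr e]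
  have := cnt_eq_q n [] rfl
  simpa [cnt] using this

lemma qfn_parity : ∀ n d, Odd (n + d) → qfn n d = 0 := by
  intro n
  induction n with
  | zero =>
    intro d hd
    rcases d with _ | d
    · simp at hd
    · rfl
  | succ n ih =>
    intro d hd
    rcases d with _ | d
    · rw [show qfn (n+1) 0 = 4 * qfn n 1 from rfl, ih 1 (by simpa using hd)]
    · rw [show qfn (n+1) (d+1) = qfn n d + 3 * qfn n (d+2) from rfl,
        ih d (by rcases hd with ⟨k, hk⟩; exact ⟨k - 1, by omega⟩),
        ih (d+2) (by rcases hd with ⟨k, hk⟩; exact ⟨k, by omega⟩)]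

lemma qfn00 : qfn 0 0 = 1 := rfl
lemma qfn0succ (d : ℕ) : qfn 0 (d+1) = 0 := rfl
lemma qfnsucc0 (n : ℕ) : qfn (n+1) 0 = 4 * qfn n 1 := rfl
lemma qfnsuccsucc (n d : ℕ) : qfn (n+1) (d+1) = qfn n d + 3 * qfn n (d+2) := rfl

noncomputable abbrev s3 : ℝ := Real.sqrt 3

lemma s3_pos : (0:ℝ) < s3 := Real.sqrt_pos.2 (by norm_num)
lemma s3_sq : s3 ^ 2 = 3 := Real.sq_sqrt (by norm_num)

lemma qfn_bound : ∀ n d, (qfn n d : ℝ) * s3 ^ d ≤ (2 * s3) ^ n := by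
  intro n
  induction n with
  | zero =>
    intro d
    rcases d with _ | d
    · simp [qfn00]
    · simp [qfn0succ]
  | succ n ih =>
    intro d
    have hs := s3_pos
    have hsq := s3_sq
    have hX : (0:ℝ) ≤ (2 * s3) ^ n := by positivity
    rcases d with _ | d
    · have h1 := ih 1
      rw [qfnsucc0]
      push_cast
      rw [pow_succ]
      simp only [pow_zero, mul_one]
      rw [pow_one] at h1
      nlinarith [Nat.cast_nonneg (α := ℝ) (qfn n 1)]
    · have h1 := ih d
      have h2 := ih (d + 2)
      rw [qfnsuccsucc]
      push_cast
      have e1 : s3 ^ (d + 1) = s3 ^ d * s3 := pow_succ _ _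
      have e2 : s3 ^ (d + 2) = s3 ^ d * s3 ^ 2 := by ring
      rw [e2] at h2
      rw [e1, pow_succ]
      nlinarith [Nat.cast_nonneg (α := ℝ) (qfn n d), Nat.cast_nonneg (α := ℝ) (qfn n (d+2)),
        pow_nonneg (le_of_lt hs) d]

set_option maxHeartbeats 2000000 in
theorem analytic (z : ℝ) (hz : |z| < 1 / (2 * Real.sqrt 3)) :
    HasSum (fun n : ℕ => (qfn n 0 : ℝ) * z ^ n)
      (3 / (1 + 2 * Real.sqrt (1 - 12 * z ^ 2))) := by
  have hs := s3_pos
  have hsq3 := s3_sq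
  set r : ℝ := 2 * s3 * |z| with hrdef
  have hr0 : 0 ≤ r := by positivity
  have hr1 : r < 1 := by
    have h2 : 0 < 2 * s3 := by positivity
    calc r = 2 * s3 * |z| := rfl
    _ < 2 * s3 * (1 / (2 * s3)) := by exact mul_lt_mul_of_pos_left hz h2
    _ = 1 := by field_simp
  have hqle : ∀ n d, (qfn n d : ℝ) ≤ (2 * s3) ^ n * (s3⁻¹) ^ d := by
    intro n d
    have h := qfn_bound n d
    have hp : (0:ℝ) < s3 ^ d := by positivity
    rw [inv_pow, ← div_eq_mul_inv, le_div_iff₀ hp]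
    exact h
  have hbound : ∀ d n, ‖(qfn n d : ℝ) * z ^ n‖ ≤ (s3⁻¹) ^ d * r ^ n := by
    intro d n
    rw [norm_mul, norm_pow, Real.norm_eq_abs, Real.norm_eq_abs,
      abs_of_nonneg (Nat.cast_nonneg _)]
    have : (s3⁻¹) ^ d * r ^ n = ((2 * s3) ^ n * (s3⁻¹) ^ d) * |z| ^ n := by
      rw [hrdef, mul_pow]; ring
    rw [this]
    exact mul_le_mul_of_nonneg_right (hqle n d) (by positivity)
  have hgeo : ∀ d : ℕ, Summable (fun n : ℕ => (s3⁻¹) ^ d * r ^ n) :=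
    fun d => (summable_geometric_of_lt_one hr0 hr1).mul_left _
  have hsummable : ∀ d, Summable (fun n => (qfn n d : ℝ) * z ^ n) :=
    fun d => Summable.of_norm_bounded (hgeo d) (hbound d)
  set S : ℕ → ℝ := fun d => ∑' n, (qfn n d : ℝ) * z ^ n with hSdef
  have hS0 : S 0 = 1 + 4 * z * S 1 := by
    show (∑' n : ℕ, ((qfn n 0 : ℕ) : ℝ) * z ^ n)
      = 1 + 4 * z * (∑' n : ℕ, ((qfn n 1 : ℕ) : ℝ) * z ^ n)
    rw [Summable.tsum_eq_zero_add (hsummable 0)]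
    have h1 : ((qfn 0 0 : ℕ) : ℝ) * z ^ 0 = 1 := by rw [qfn00]; simp
    have h2 : ∀ n : ℕ, ((qfn (n+1) 0 : ℕ) : ℝ) * z ^ (n+1)
        = (4 * z) * (((qfn n 1 : ℕ) : ℝ) * z ^ n) := by
      intro n
      rw [qfnsucc0]
      push_cast
      ring
    have h3 : (∑' n : ℕ, ((qfn (n+1) 0 : ℕ) : ℝ) * z ^ (n+1))
        = 4 * z * ∑' n : ℕ, ((qfn n 1 : ℕ) : ℝ) * z ^ n := by
      rw [← tsum_mul_left]
      exact tsum_congr h2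
    rw [h1, h3]
  have hSrec : ∀ d, S (d+1) = z * S d + 3 * z * S (d+2) := by
    intro d
    show (∑' n : ℕ, ((qfn n (d+1) : ℕ) : ℝ) * z ^ n)
      = z * (∑' n : ℕ, ((qfn n d : ℕ) : ℝ) * z ^ n)
        + 3 * z * (∑' n : ℕ, ((qfn n (d+2) : ℕ) : ℝ) * z ^ n)
    rw [Summable.tsum_eq_zero_add (hsummable (d+1))]
    have h1 : ((qfn 0 (d+1) : ℕ) : ℝ) * z ^ 0 = 0 := by rw [qfn0succ]; simp
    have h2 : (fun n : ℕ => ((qfn (n+1) (d+1) : ℕ) : ℝ) * z ^ (n+1))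
        = (fun n : ℕ => z * (((qfn n d : ℕ) : ℝ) * z ^ n)
            + 3 * z * (((qfn n (d+2) : ℕ) : ℝ) * z ^ n)) := by
      funext n
      rw [qfnsuccsucc]
      push_cast
      ring
    rw [h1, h2, Summable.tsum_add ((hsummable d).mul_left z) ((hsummable (d+2)).mul_left (3*z)),
      tsum_mul_left, tsum_mul_left]
    ring
  have hSbound : ∀ d, |S d| ≤ (s3⁻¹) ^ d * (1 - r)⁻¹ := by
    intro d
    have hnorm : Summable (fun n => ‖(qfn n d : ℝ) * z ^ n‖) :=
      Summable.of_nonneg_of_le (fun n => norm_nonneg _) (hbound d) (hgeo d)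
    calc |S d| ≤ ∑' n, ‖(qfn n d : ℝ) * z ^ n‖ := by
          rw [← Real.norm_eq_abs]; exact norm_tsum_le_tsum_norm hnorm
    _ ≤ ∑' n, (s3⁻¹) ^ d * r ^ n := Summable.tsum_le_tsum (hbound d) hnorm (hgeo d)
    _ = (s3⁻¹) ^ d * (1 - r)⁻¹ := by
          rw [tsum_mul_left, tsum_geometric_of_lt_one hr0 hr1]
  -- case z = 0
  by_cases hz0 : z = 0
  · subst hz0
    have : (3 : ℝ) / (1 + 2 * Real.sqrt (1 - 12 * 0 ^ 2)) = 1 := by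
      norm_num
    rw [this]
    have h1 : ∀ n : ℕ, n ≠ 0 → ((qfn n 0 : ℕ) : ℝ) * (0:ℝ) ^ n = 0 := by
      intro n hn
      rw [zero_pow hn, mul_zero]
    have := hasSum_single (f := fun n : ℕ => ((qfn n 0 : ℕ) : ℝ) * (0:ℝ) ^ n) 0 h1
    simpa [qfn00] using this
  -- main case
  set sq : ℝ := Real.sqrt (1 - 12 * z ^ 2) with hsqdef
  have h12z : 12 * z ^ 2 < 1 := by
    have : |z| ^ 2 < (1 / (2 * s3)) ^ 2 :=
      pow_lt_pow_left₀ hz (abs_nonneg z) (by norm_num)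
    rw [sq_abs] at this
    have he : (1 / (2 * s3)) ^ 2 = 1 / 12 := by
      rw [div_pow, mul_pow, hsq3]; norm_num
    rw [he] at this
    linarith
  have hsqpos : 0 < sq := Real.sqrt_pos.2 (by linarith)
  have hsqsq : sq ^ 2 = 1 - 12 * z ^ 2 := Real.sq_sqrt (by linarith)
  set lam : ℝ := (1 - sq) / (6 * z) with hlamdef
  set mu : ℝ := (1 + sq) / (6 * z) with hmudef
  set Q : ℝ := 3 / (1 + 2 * sq) with hQdef
  have h2sq : (0:ℝ) < 1 + 2 * sq := by linarith
  have hlameq : z + 3 * z * lam ^ 2 = lam := by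
    rw [hlamdef]
    field_simp
    nlinarith [hsqsq]
  have hmueq : z + 3 * z * mu ^ 2 = mu := by
    rw [hmudef]
    field_simp
    nlinarith [hsqsq]
  have hQeq : Q = 1 + 4 * z * lam * Q := by
    rw [hQdef, hlamdef]
    field_simp
    ring
  have hsqprod : (1 - sq) * (1 + sq) = 12 * z ^ 2 := by
    linear_combination - hsqsq
  have hlammu : lam * mu = 1 / 3 := by
    rw [hlamdef, hmudef, div_mul_div_comm, hsqprod]
    rw [div_eq_div_iff (by positivity) (by norm_num : (3:ℝ) ≠ 0)]
    ring
  have h6z : 6 * |z| < s3 := by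
    nlinarith [hr1, hs, hsq3, abs_nonneg z]
  have hmuabs : s3⁻¹ < |mu| := by
    have hz0' : 0 < |z| := abs_pos.2 hz0
    have : |mu| = (1 + sq) / (6 * |z|) := by
      rw [hmudef, abs_div, abs_of_pos (by linarith : (0:ℝ) < 1 + sq)]
      congr 1
      rw [abs_mul]
      norm_num
    rw [this, lt_div_iff₀ (by linarith : (0:ℝ) < 6 * |z|)]
    have h1 : s3⁻¹ * (6 * |z|) < s3⁻¹ * s3 := by
      apply mul_lt_mul_of_pos_left h6z (by positivity)
    rw [inv_mul_cancel₀ (ne_of_gt hs)] at h1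
    linarith
  have hmupos : 0 < |mu| := lt_trans (by positivity) hmuabs
  have hlamabs : |lam| < s3⁻¹ := by
    have h1 : |lam| * |mu| = 1 / 3 := by
      rw [← abs_mul, hlammu]
      norm_num
    have hinv : s3⁻¹ * s3⁻¹ = 1 / 3 := by
      rw [← mul_inv, Real.mul_self_sqrt (by norm_num : (0:ℝ) ≤ 3)]
      norm_num
    by_contra hcon
    push_neg at hcon
    have h2 : s3⁻¹ * s3⁻¹ < |lam| * |mu| := by
      calc s3⁻¹ * s3⁻¹ < s3⁻¹ * |mu| :=
            mul_lt_mul_of_pos_left hmuabs (by positivity)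
      _ ≤ |lam| * |mu| := mul_le_mul_of_nonneg_right hcon (le_of_lt hmupos)
    rw [hinv, h1] at h2
    exact lt_irrefl _ h2
  have hlamabs' : 0 ≤ |lam| := abs_nonneg lam
  set T : ℕ → ℝ := fun d => S d - Q * lam ^ d with hTdef
  have hT0 : T 0 = 4 * z * T 1 := by
    simp only [hTdef, pow_zero, pow_one, mul_one]
    linear_combination hS0 - hQeq
  have hTrec : ∀ d, T (d+1) = z * T d + 3 * z * T (d+2) := by
    intro d
    simp only [hTdef]
    linear_combination hSrec d + Q * lam ^ d * hlameq
  have hmulam : mu - lam ≠ 0 := by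
    rw [hmudef, hlamdef]
    rw [div_sub_div_same]
    have : 1 + sq - (1 - sq) = 2 * sq := by ring
    rw [this]
    apply div_ne_zero (by linarith) (by simpa using hz0)
  set B : ℝ := (T 1 - lam * T 0) / (mu - lam) with hBdef
  set A : ℝ := T 0 - B with hAdef
  have hBmul : B * (mu - lam) = T 1 - lam * T 0 := by
    rw [hBdef, div_mul_cancel₀ _ hmulam]
  have h3z : (3:ℝ) * z ≠ 0 := by simpa using hz0
  have hAB : ∀ d, T d = A * lam ^ d + B * mu ^ d := by
    have key : ∀ d, T d = A * lam ^ d + B * mu ^ d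
        ∧ T (d+1) = A * lam ^ (d+1) + B * mu ^ (d+1) := by
      intro d
      induction d with
      | zero =>
        constructor
        · simp only [pow_zero, mul_one, hAdef]
          ring
        · simp only [pow_one, hAdef]
          linear_combination - hBmul
      | succ d ih =>
        refine ⟨ih.2, ?_⟩
        have hcan : 3 * z * T (d+2) = 3 * z * (A * lam ^ (d+2) + B * mu ^ (d+2)) := by
          linear_combination - hTrec d + ih.2 - z * ih.1 - A * lam ^ d * hlameq
            - B * mu ^ d * hmueq
        exact mul_left_cancel₀ h3z hcan
    exact fun d => (key d).1
  have hBzero : B = 0 := by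
    set K : ℝ := (1 - r)⁻¹ + |Q| + |A| with hKdef
    have hKb : ∀ d, |B| * |mu| ^ d ≤ K * (s3⁻¹) ^ d := by
      intro d
      have h1 : B * mu ^ d = T d - A * lam ^ d := by linear_combination - hAB d
      have h2 : |B| * |mu| ^ d = |B * mu ^ d| := by
        rw [abs_mul, abs_pow]
      rw [h2, h1]
      have h3 : |T d - A * lam ^ d| ≤ |T d| + |A| * |lam| ^ d := by
        calc |T d - A * lam ^ d| ≤ |T d| + |A * lam ^ d| := abs_sub _ _
        _ = |T d| + |A| * |lam| ^ d := by rw [abs_mul, abs_pow]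
      have h4 : |T d| ≤ ((1 - r)⁻¹ + |Q|) * (s3⁻¹) ^ d := by
        have : |T d| ≤ |S d| + |Q| * |lam| ^ d := by
          simp only [hTdef]
          calc |S d - Q * lam ^ d| ≤ |S d| + |Q * lam ^ d| := abs_sub _ _
          _ = |S d| + |Q| * |lam| ^ d := by rw [abs_mul, abs_pow]
        have hlam_le : |lam| ^ d ≤ (s3⁻¹) ^ d :=
          pow_le_pow_left₀ hlamabs' (le_of_lt hlamabs) d
        have hSb := hSbound d
        calc |T d| ≤ |S d| + |Q| * |lam| ^ d := this
        _ ≤ (s3⁻¹) ^ d * (1 - r)⁻¹ + |Q| * (s3⁻¹) ^ d := by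
              gcongr
        _ = ((1 - r)⁻¹ + |Q|) * (s3⁻¹) ^ d := by ring
      have hlam_le : |lam| ^ d ≤ (s3⁻¹) ^ d :=
        pow_le_pow_left₀ hlamabs' (le_of_lt hlamabs) d
      calc |T d - A * lam ^ d| ≤ |T d| + |A| * |lam| ^ d := h3
      _ ≤ ((1 - r)⁻¹ + |Q|) * (s3⁻¹) ^ d + |A| * (s3⁻¹) ^ d := by
            gcongr
      _ = K * (s3⁻¹) ^ d := by rw [hKdef]; ring
    have hrho : s3⁻¹ / |mu| < 1 := by
      rw [div_lt_one hmupos]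
      exact hmuabs
    have hrho0 : 0 ≤ s3⁻¹ / |mu| := by positivity
    have hBle : ∀ d, |B| ≤ K * (s3⁻¹ / |mu|) ^ d := by
      intro d
      have h1 := hKb d
      have h2 : 0 < |mu| ^ d := by positivity
      rw [← le_div_iff₀ h2] at h1
      calc |B| ≤ K * (s3⁻¹) ^ d / |mu| ^ d := h1
      _ = K * (s3⁻¹ / |mu|) ^ d := by rw [div_pow]; ring
    have htend : Filter.Tendsto (fun d : ℕ => K * (s3⁻¹ / |mu|) ^ d)
        Filter.atTop (nhds 0) := by
      have := tendsto_pow_atTop_nhds_zero_of_lt_one hrho0 hrho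
      simpa using this.const_mul K
    have hB0 : |B| ≤ 0 := ge_of_tendsto htend (Filter.Eventually.of_forall hBle)
    exact abs_eq_zero.1 (le_antisymm hB0 (abs_nonneg B))
  have hAzero : A = 0 := by
    have h1 : T 0 = A := by
      rw [hAB 0, hBzero]
      simp
    have h2 : T 1 = A * lam := by
      rw [hAB 1, hBzero]
      simp
    have h3 : A = 4 * z * (A * lam) := by rw [← h2, ← h1]; exact hT0
    have h4 : A * (1 - 4 * z * lam) = 0 := by linear_combination h3
    have h5 : (1:ℝ) - 4 * z * lam ≠ 0 := by
      have : 1 - 4 * z * lam = (1 + 2 * sq) / 3 := by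
        rw [hlamdef]
        field_simp
        ring
      rw [this]
      positivity
    exact (mul_eq_zero.1 h4).resolve_right h5
  have hS0Q : S 0 = Q := by
    have := hAB 0
    rw [hBzero, hAzero] at this
    simp only [hTdef, pow_zero, mul_one] at this
    linarith [this]
  have hfinal := (hsummable 0).hasSum
  rw [show (∑' n, (qfn n 0 : ℝ) * z ^ n) = S 0 from rfl, hS0Q, hQdef] at hfinal
  exact hfinal

lemma f2TrivialCount_eq_qfn (n : ℕ) : f2TrivialCount n = qfn n 0 := count_eq_q n

end Aux

/-- In `F₂`, the generating function of trivial words is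
`R(z) = 3 / (1 + 2√(1 - 12z²))` (valid for `|z| < 1/(2√3)`), and the number of
trivial words of odd length is `0`. -/
theorem stmt5 :
    (∀ z : ℝ, |z| < 1 / (2 * Real.sqrt 3) →
      HasSum (fun n : ℕ => (f2TrivialCount n : ℝ) * z ^ n)
        (3 / (1 + 2 * Real.sqrt (1 - 12 * z ^ 2)))) ∧
      ∀ n : ℕ, Odd n → f2TrivialCount n = 0 := by
  constructor
  · intro z hz
    have h := analytic z hz
    have he : (fun n : ℕ => (f2TrivialCount n : ℝ) * z ^ n)
        = (fun n : ℕ => (qfn n 0 : ℝ) * z ^ n) := by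
      funext n
      rw [f2TrivialCount_eq_qfn]
    rw [he]
    exact h
  · intro n hn
    rw [f2TrivialCount_eq_qfn]
    exact qfn_parity n 0 (by simpa using hn)
end

section
/- For the free group F_2 on two generators with the standard generating set, the growth rate of trivial words is ρ = 2√3, i.e., limsup r_n^{1/n} = 2√3, where r_n counts length-n words over the 4-letter alphabet reducing to the identity. -/
open Filter Topology ENNReal

namespace F2G
abbrev A := Fin 2 × Bool
def linv (x : A) : A := (x.1, !x.2)
def nA (x : A) : ℕ := 2 * x.1.val + cond x.2 1 0
def idx3 (f x : A) : Fin 3 := ⟨(if nA x < nA f then nA x else nA x - 1) % 3, Nat.mod_lt _ (by norm_num)⟩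
def ofNA : ℕ → A
  | 0 => (0, false)
  | 1 => (0, true)
  | 2 => (1, false)
  | _ => (1, true)
def inv3 (f : A) (t : Fin 3) : A := ofNA (if t.val < nA f then t.val else t.val + 1)
lemma inv3_idx3 : ∀ f x : A, x ≠ f → inv3 f (idx3 f x) = x := by decide
lemma inv3_ne : ∀ (f : A) (t : Fin 3), inv3 f t ≠ f := by decide
lemma inv3_inj : ∀ (f : A) (t t' : Fin 3), inv3 f t = inv3 f t' → t = t' := by decide
lemma linv_linv : ∀ x : A, linv (linv x) = x := by decide
lemma linv_inj : ∀ x y : A, linv x = linv y → x = y := by decide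
lemma linv_swap : ∀ x y : A, (y = linv x) ↔ (x = linv y) := by decide
lemma cond_iff : ∀ x y : A, (x.1 = y.1 ∧ x.2 = !y.2) ↔ y = linv x := by decide
def redStep (x : A) : List A → List A
  | [] => [x]
  | y :: ys => if y = linv x then ys else x :: y :: ys
lemma reduce_cons (x : A) (v : List A) :
    FreeGroup.reduce (x :: v) = redStep x (FreeGroup.reduce v) := by
  rw [FreeGroup.reduce.cons]
  cases h : FreeGroup.reduce v with
  | nil => rfl
  | cons y ys =>
      simp only [redStep]
      by_cases hc : y = linv x
      · rw [if_pos (by rw [cond_iff]; exact hc), if_pos hc]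
      · rw [if_neg (by rw [cond_iff]; exact hc), if_neg hc]

/-! ### the encoding -/

inductive Sym
  | T (x : A)
  | U (t : Fin 3)
  | D
  deriving DecidableEq

def encStep (x : A) : List A → List Sym
  | [] => [.T x]
  | y :: ys => if y = linv x then (if ys = [] then [] else [.D]) else [.U (idx3 (linv y) x)]

def enc : List A → List Sym
  | [] => []
  | x :: v => encStep x (FreeGroup.reduce v) ++ enc v

def cT : List Sym → ℕ
  | [] => 0
  | .T _ :: c => cT c + 1
  | _ :: c => cT c

def cU : List Sym → ℕ
  | [] => 0
  | .U _ :: c => cU c + 1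
  | _ :: c => cU c

def cD : List Sym → ℕ
  | [] => 0
  | .D :: c => cD c + 1
  | _ :: c => cD c

@[simp] lemma cT_append (c c' : List Sym) : cT (c ++ c') = cT c + cT c' := by
  induction c with
  | nil => simp [cT]
  | cons s c ih => cases s <;> simp [cT, ih] <;> omega

@[simp] lemma cU_append (c c' : List Sym) : cU (c ++ c') = cU c + cU c' := by
  induction c with
  | nil => simp [cU]
  | cons s c ih => cases s <;> simp [cU, ih] <;> omega

@[simp] lemma cD_append (c c' : List Sym) : cD (c ++ c') = cD c + cD c' := by
  induction c with
  | nil => simp [cD]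
  | cons s c ih => cases s <;> simp [cD, ih] <;> omega

lemma c_total (c : List Sym) : cT c + cU c + cD c = c.length := by
  induction c with
  | nil => simp [cT, cU, cD]
  | cons s c ih => cases s <;> simp [cT, cU, cD, List.length_cons] <;> omega

/-- L1 invariant -/
lemma L1 (v : List A) :
    cT (enc v) + (enc v).length
      = v.length + (if FreeGroup.reduce v = [] then 0 else 1) := by
  induction v with
  | nil => simp [enc, cT]
  | cons x v ih =>
      rw [enc, reduce_cons]
      cases h : FreeGroup.reduce v with
      | nil =>
          rw [h] at ih
          simp only [encStep, redStep]
          simp only [cT_append, List.length_append]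
          simp [cT] at ih ⊢; omega
      | cons y ys =>
          rw [h] at ih
          simp only [encStep, redStep]
          by_cases hc : y = linv x
          · simp only [if_pos hc]
            cases ys with
            | nil => simp [cT] at ih ⊢; omega
            | cons z zs => simp [cT, cT_append] at ih ⊢; omega
          · simp only [if_neg hc]
            simp [cT, cT_append] at ih ⊢; omega

/-- L2 invariant -/
lemma L2 (v : List A) :
    (FreeGroup.reduce v).length + cD (enc v) + v.length
      = cT (enc v) + cU (enc v) + (enc v).length := by
  induction v with
  | nil => simp [enc, cT, cU, cD]
  | cons x v ih =>
      rw [enc, reduce_cons]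
      cases h : FreeGroup.reduce v with
      | nil =>
          rw [h] at ih
          simp only [encStep, redStep]
          simp [cT, cU, cD, cT_append, cU_append, cD_append] at ih ⊢; omega
      | cons y ys =>
          rw [h] at ih
          simp only [encStep, redStep]
          by_cases hc : y = linv x
          · simp only [if_pos hc]
            cases ys with
            | nil => simp [cT, cU, cD] at ih ⊢; omega
            | cons z zs =>
                simp [cT, cU, cD, cT_append, cU_append, cD_append] at ih ⊢; omega
          · simp only [if_neg hc]
            simp [cT, cU, cD, cT_append, cU_append, cD_append] at ih ⊢; omega

/-! ### scan : recovering the classification from the shape -/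

inductive Cl
  | T
  | U
  | D
  deriving DecidableEq

def scan : ℕ → List Bool → List Cl
  | _, [] => []
  | d, true :: s => if d ≤ 1 then .T :: scan 0 s else .U :: scan (d - 1) s
  | d, false :: s => .D :: scan (max d 1 + 1) s

def shape : List Sym → List Bool :=
  List.map fun s => match s with | .D => false | _ => true

def classify : List Sym → List Cl :=
  List.map fun s => match s with | .T _ => .T | .U _ => .U | .D => .D

lemma scan_zero_one (s : List Bool) : scan 0 s = scan 1 s := by
  cases s with
  | nil => rfl
  | cons b s => cases b <;> simp [scan]

@[simp] lemma shape_T (x : A) (c : List Sym) : shape (.T x :: c) = true :: shape c := rfl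
@[simp] lemma shape_U (t : Fin 3) (c : List Sym) : shape (.U t :: c) = true :: shape c := rfl
@[simp] lemma shape_D (c : List Sym) : shape (.D :: c) = false :: shape c := rfl
@[simp] lemma classify_T (x : A) (c : List Sym) : classify (.T x :: c) = .T :: classify c := rfl
@[simp] lemma classify_U (t : Fin 3) (c : List Sym) : classify (.U t :: c) = .U :: classify c := rfl
@[simp] lemma classify_D (c : List Sym) : classify (.D :: c) = .D :: classify c := rfl

/-- the scan invariant -/
lemma scan_inv (v : List A) :
    scan (FreeGroup.reduce v).length (shape (enc v)) = classify (enc v) := by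
  induction v with
  | nil => rfl
  | cons x v ih =>
      rw [enc, reduce_cons]
      cases h : FreeGroup.reduce v with
      | nil =>
          rw [h] at ih; simp only [List.length_nil] at ih
          simp only [encStep, redStep, List.singleton_append, List.length_singleton, shape_T,
            classify_T]
          rw [scan, if_pos (le_refl 1)]
          rw [ih]
      | cons y ys =>
          rw [h] at ih; simp only [List.length_cons] at ih
          simp only [encStep, redStep]
          by_cases hc : y = linv x
          · simp only [if_pos hc]
            cases ys with
            | nil =>
                rw [if_pos rfl, List.nil_append, List.length_nil, scan_zero_one]
                simpa using ih
            | cons z zs =>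
                rw [if_neg (List.cons_ne_nil z zs), List.singleton_append, shape_D, classify_D,
                  List.length_cons, scan]
                simp only [List.length_cons] at ih
                have e : max (zs.length + 1) 1 + 1 = zs.length + 1 + 1 := by omega
                rw [e, ih]
          · simp only [if_neg hc]
            rw [List.singleton_append, shape_U, classify_U, List.length_cons, List.length_cons,
              scan, if_neg (by omega)]
            have e : ys.length + 1 + 1 - 1 = ys.length + 1 := by omega
            rw [e, ih]

/-! ### labels and rebuild -/

def labT : List Sym → List A
  | [] => []
  | .T x :: c => x :: labT c
  | _ :: c => labT c

def labU : List Sym → List (Fin 3)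
  | [] => []
  | .U t :: c => t :: labU c
  | _ :: c => labU c

def rebuild : List Cl → List A → List (Fin 3) → List Sym
  | .T :: cl, x :: l4, l3 => .T x :: rebuild cl l4 l3
  | .U :: cl, l4, t :: l3 => .U t :: rebuild cl l4 l3
  | .D :: cl, l4, l3 => .D :: rebuild cl l4 l3
  | _, _, _ => []

lemma rebuild_eq (c : List Sym) : rebuild (classify c) (labT c) (labU c) = c := by
  induction c with
  | nil => rfl
  | cons s c ih => cases s <;> simp [classify, labT, labU, rebuild] at * <;> exact ih

/-! ### injectivity of enc on words of fixed length -/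

lemma red_nil_iff (x : A) (u : List A) :
    FreeGroup.reduce (x :: u) = [] ↔ FreeGroup.reduce u = [linv x] := by
  rw [reduce_cons]
  cases h : FreeGroup.reduce u with
  | nil => simp [redStep]
  | cons y ys =>
      simp only [redStep]
      by_cases hc : y = linv x
      · simp [hc]
      · simp [hc]

lemma enc_inj : ∀ v w : List A, v.length = w.length → enc v = enc w → v = w := by
  intro v
  induction v with
  | nil =>
      intro w h _
      cases w with
      | nil => rfl
      | cons a b => simp at h
  | cons x u ih =>
      intro w hlen henc
      cases w with
      | nil => simp at hlen
      | cons y t =>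
          have hlen' : u.length = t.length := by simpa using hlen
          -- branch-2 detection
          have hdet : (FreeGroup.reduce (x :: u) = []) ↔ (FreeGroup.reduce (y :: t) = []) := by
            have h1 := L1 (x :: u)
            have h2 := L1 (y :: t)
            rw [henc] at h1
            rw [show (x :: u).length = (y :: t).length from hlen] at h1
            constructor
            · intro e1
              by_contra e2
              rw [if_pos e1] at h1; rw [if_neg e2] at h2; omega
            · intro e2
              by_contra e1
              rw [if_neg e1] at h1; rw [if_pos e2] at h2; omega
          by_cases hb2 : FreeGroup.reduce (x :: u) = []
          · have hb2' : FreeGroup.reduce (y :: t) = [] := hdet.mp hb2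
            have hu : FreeGroup.reduce u = [linv x] := (red_nil_iff _ _).mp hb2
            have ht : FreeGroup.reduce t = [linv y] := (red_nil_iff _ _).mp hb2'
            have he : enc u = enc t := by
              have : enc (x :: u) = enc u := by rw [enc, hu, encStep]; simp
              have h2 : enc (y :: t) = enc t := by rw [enc, ht, encStep]; simp
              rw [this, h2] at henc; exact henc
            have := ih t hlen' he
            subst this
            have : linv x = linv y := by rw [hu] at ht; injection ht
            have : x = y := by
              have := congrArg linv this
              simpa [linv] using this
            rw [this]
          · have hb2' : ¬ FreeGroup.reduce (y :: t) = [] := fun h => hb2 (hdet.mpr h)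
            -- both encStep nonempty
            rw [enc, enc] at henc
            -- we need: encStep x (reduce u) is a singleton [s], similarly for y
            have key : ∀ (z : A) (r : List A), redStep z r ≠ [] →
                ∃ s : Sym, encStep z r = [s] := by
              intro z r hr
              cases r with
              | nil => exact ⟨_, rfl⟩
              | cons a as =>
                  simp only [encStep, redStep] at *
                  by_cases hc : a = linv z
                  · simp only [if_pos hc] at *
                    cases as with
                    | nil => exact absurd rfl hr
                    | cons b bs => exact ⟨_, rfl⟩
                  · simp only [if_neg hc]; exact ⟨_, rfl⟩
            obtain ⟨s1, hs1⟩ := key x (FreeGroup.reduce u) (by rwa [← reduce_cons])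
            obtain ⟨s2, hs2⟩ := key y (FreeGroup.reduce t) (by rwa [← reduce_cons])
            rw [hs1, hs2] at henc
            simp only [List.cons_append, List.nil_append, List.singleton_append,
              List.cons.injEq] at henc
            obtain ⟨hss, henc'⟩ := henc
            have := ih t hlen' henc'
            subst this
            -- now recover x = y from s1 = s2 and common reduce u
            subst hss
            cases hru : FreeGroup.reduce u with
            | nil =>
                rw [hru] at hs1 hs2
                simp only [encStep] at hs1 hs2
                have hcomb := hs1.trans hs2.symm
                injection hcomb with h'
                injection h' with h''
                rw [h'']
            | cons a as =>
                rw [hru] at hs1 hs2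
                simp only [encStep] at hs1 hs2
                by_cases hc1 : a = linv x <;> by_cases hc2 : a = linv y
                · have : x = y := by
                    rw [linv_swap] at hc1 hc2; rw [hc1, hc2]
                  rw [this]
                · rw [if_pos hc1] at hs1
                  rw [if_neg hc2] at hs2
                  have hcomb := hs1.trans hs2.symm
                  cases as with
                  | nil => simp at hcomb
                  | cons b bs => simp at hcomb
                · rw [if_neg hc1] at hs1
                  rw [if_pos hc2] at hs2
                  have hcomb := hs1.trans hs2.symm
                  cases as with
                  | nil => simp at hcomb
                  | cons b bs => simp at hcomb
                · rw [if_neg hc1] at hs1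
                  rw [if_neg hc2] at hs2
                  have hcomb := hs1.trans hs2.symm
                  injection hcomb with h'
                  injection h' with h''
                  have hx : x = inv3 (linv a) (idx3 (linv a) x) :=
                    (inv3_idx3 _ _ (fun hq => hc1 ((linv_swap a x).mp hq))).symm
                  have hy : y = inv3 (linv a) (idx3 (linv a) y) :=
                    (inv3_idx3 _ _ (fun hq => hc2 ((linv_swap a y).mp hq))).symm
                  rw [hx, hy, h'']


/-! ### stage-2 : packaging into vectors and counting -/

@[simp] lemma shape_length (c : List Sym) : (shape c).length = c.length := by
  simp [shape]

lemma labT_length (c : List Sym) : (labT c).length = cT c := by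
  induction c with
  | nil => rfl
  | cons s c ih => cases s <;> simp [labT, cT, ih]

lemma labU_length (c : List Sym) : (labU c).length = cU c := by
  induction c with
  | nil => rfl
  | cons s c ih => cases s <;> simp [labU, cU, ih]

/-- counts for a trivial word of length 2n -/
lemma triv_counts {n : ℕ} {l : List A} (hlen : l.length = 2 * n)
    (hred : FreeGroup.reduce l = []) :
    cT (enc l) ≤ n ∧ (enc l).length = 2 * n - cT (enc l) ∧ cU (enc l) = n - cT (enc l) := by
  have h1 := L1 l
  have h2 := L2 l
  have h3 := c_total (enc l)
  rw [hred] at h1 h2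
  simp at h1 h2
  rw [hlen] at h1 h2
  omega

abbrev Target (n : ℕ) : Type :=
  Σ k : Fin (n + 1),
    (List.Vector Bool (2 * n - k) × List.Vector A k × List.Vector (Fin 3) (n - k))

def trivSub (n : ℕ) : Type := {l : List A // l.length = n ∧ FreeGroup.reduce l = []}

def pack (n : ℕ) (w : trivSub (2 * n)) : Target n :=
  ⟨⟨cT (enc w.1), by
      have := triv_counts w.2.1 w.2.2
      omega⟩,
    ⟨shape (enc w.1), by
      have := triv_counts w.2.1 w.2.2
      simp only [shape_length]
      exact this.2.1⟩,
    ⟨labT (enc w.1), labT_length _⟩,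
    ⟨labU (enc w.1), by
      have := triv_counts w.2.1 w.2.2
      rw [labU_length]
      exact this.2.2⟩⟩

lemma pack_injective (n : ℕ) : Function.Injective (pack n) := by
  intro w w' h
  have hfst := congrArg (fun z : Target n => (z.1 : ℕ)) h
  have hsh := congrArg (fun z : Target n => z.2.1.toList) h
  have hl4 := congrArg (fun z : Target n => z.2.2.1.toList) h
  have hl3 := congrArg (fun z : Target n => z.2.2.2.toList) h
  simp only [pack, List.Vector.toList_mk] at hfst hsh hl4 hl3
  -- classification equality via scan
  have hcl : classify (enc w.1) = classify (enc w'.1) := by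
    have i1 := scan_inv w.1
    have i2 := scan_inv w'.1
    rw [w.2.2] at i1
    rw [w'.2.2] at i2
    simp only [List.length_nil] at i1 i2
    rw [← i1, ← i2, hsh]
  have henc : enc w.1 = enc w'.1 := by
    rw [← rebuild_eq (enc w.1), ← rebuild_eq (enc w'.1), hcl, hl4, hl3]
  exact Subtype.ext (enc_inj _ _ (by rw [w.2.1, w'.2.1]) henc)

lemma geo_sum : ∀ n : ℕ, (∑ k ∈ Finset.range (n + 1), 2 ^ k * 3 ^ (n - k)) + 2 ^ (n + 1) ≤ 3 ^ (n + 1) := by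
  intro n
  induction n with
  | zero => norm_num
  | succ m ih =>
      have hsplit : (∑ k ∈ Finset.range (m + 2), 2 ^ k * 3 ^ (m + 1 - k))
          = (∑ k ∈ Finset.range (m + 1), 2 ^ k * 3 ^ (m + 1 - k)) + 2 ^ (m + 1) * 3 ^ 0 := by
        rw [Finset.sum_range_succ]
        simp
      have hstep : (∑ k ∈ Finset.range (m + 1), 2 ^ k * 3 ^ (m + 1 - k))
          = 3 * ∑ k ∈ Finset.range (m + 1), 2 ^ k * 3 ^ (m - k) := by
        rw [Finset.mul_sum]
        apply Finset.sum_congr rfl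
        intro k hk
        simp only [Finset.mem_range] at hk
        have : m + 1 - k = (m - k) + 1 := by omega
        rw [this, pow_succ]
        ring
      rw [hsplit, hstep]
      simp only [pow_zero, mul_one]
      omega

lemma card_target (n : ℕ) : Fintype.card (Target n) ≤ 3 * 12 ^ n := by
  classical
  rw [Fintype.card_sigma]
  have arith : ∀ k : ℕ, k ≤ n → (2:ℕ) ^ (2 * n - k) * (4 ^ k * 3 ^ (n - k))
      = 4 ^ n * (2 ^ k * 3 ^ (n - k)) := by
    intro k hk
    have h1 : (2:ℕ) ^ (2 * n - k) * 4 ^ k = 4 ^ n * 2 ^ k := by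
      rw [show (4:ℕ) = 2 ^ 2 from rfl, ← pow_mul, ← pow_add, ← pow_mul, ← pow_add]
      congr 1
      omega
    calc (2:ℕ) ^ (2 * n - k) * (4 ^ k * 3 ^ (n - k))
        = ((2:ℕ) ^ (2 * n - k) * 4 ^ k) * 3 ^ (n - k) := by ring
      _ = (4 ^ n * 2 ^ k) * 3 ^ (n - k) := by rw [h1]
      _ = 4 ^ n * (2 ^ k * 3 ^ (n - k)) := by ring
  have hterm : ∀ k : Fin (n + 1),
      Fintype.card (List.Vector Bool (2 * n - k) × List.Vector A k ×
        List.Vector (Fin 3) (n - k)) = 4 ^ n * (2 ^ (k : ℕ) * 3 ^ (n - k)) := by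
    intro k
    have hk : (k : ℕ) ≤ n := by omega
    have hcard : Fintype.card (List.Vector Bool (2 * n - k) × List.Vector A k ×
        List.Vector (Fin 3) (n - k)) = 2 ^ (2 * n - (k:ℕ)) * (4 ^ (k:ℕ) * 3 ^ (n - (k:ℕ))) := by
      simp [card_vector]
    rw [hcard]
    exact arith k hk
  calc (∑ k : Fin (n+1), Fintype.card (List.Vector Bool (2 * n - k) × List.Vector A k ×
        List.Vector (Fin 3) (n - k)))
      = ∑ k : Fin (n+1), 4 ^ n * (2 ^ (k:ℕ) * 3 ^ (n - k)) := by
        exact Finset.sum_congr rfl fun k _ => hterm k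
    _ = 4 ^ n * ∑ k ∈ Finset.range (n+1), 2 ^ k * 3 ^ (n - k) := by
        rw [← Finset.mul_sum]
        congr 1
        exact Fin.sum_univ_eq_sum_range (fun k => 2 ^ k * 3 ^ (n - k)) (n + 1)
    _ ≤ 4 ^ n * 3 ^ (n + 1) := by
        have h := geo_sum n
        exact Nat.mul_le_mul_left _ (le_trans (Nat.le_add_right _ _) h)
    _ = 3 * 12 ^ n := by
        rw [pow_succ, show (12:ℕ) = 4 * 3 from rfl, mul_pow]
        ring

lemma upper_bound (n : ℕ) : Nat.card (trivSub (2 * n)) ≤ 3 * 12 ^ n := by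
  classical
  have : Nat.card (trivSub (2 * n)) ≤ Nat.card (Target n) :=
    Nat.card_le_card_of_injective (pack n) (pack_injective n)
  calc Nat.card (trivSub (2 * n)) ≤ Nat.card (Target n) := this
    _ = Fintype.card (Target n) := Nat.card_eq_fintype_card
    _ ≤ 3 * 12 ^ n := card_target n



/-! ### lower bound : building trivial words from Dyck words -/

open DyckStep in
/-- validity of a shape starting at a given stack height: stays nonneg, ends at 0 -/
inductive Ok : List DyckStep → ℕ → Prop
  | nil : Ok [] 0
  | up {s : List DyckStep} {h : ℕ} : Ok s (h + 1) → Ok (U :: s) h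
  | down {s : List DyckStep} {h : ℕ} : Ok s h → Ok (D :: s) (h + 1)

open DyckStep in
/-- time-ordered letters realizing a shape -/
def bld : List DyckStep → List (Fin 3) → List A → List A
  | [], _, _ => []
  | U :: s, ts, stk =>
      let x := inv3 (linv stk.headI) (ts.headI)
      x :: bld s ts.tail (x :: stk)
  | D :: s, ts, stk => linv stk.headI :: bld s ts (stk.tail)

open DyckStep in
lemma bld_length : ∀ (s : List DyckStep) (ts : List (Fin 3)) (stk : List A),
    (bld s ts stk).length = s.length := by
  intro s
  induction s with
  | nil => intro ts stk; rfl
  | cons b s ih => intro ts stk; cases b <;> simp [bld, ih]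

open DyckStep in
lemma bld_reduce : ∀ (s : List DyckStep) (h : ℕ), Ok s h →
    ∀ (ts : List (Fin 3)) (stk : List A) (w0 : List A),
      FreeGroup.reduce w0 = stk → stk.length = h →
      FreeGroup.reduce ((bld s ts stk).reverse ++ w0) = [] := by
  intro s h hok
  induction hok with
  | nil =>
      intro ts stk w0 hw0 hlen
      have : stk = [] := List.eq_nil_of_length_eq_zero hlen
      subst this
      simpa [bld] using hw0
  | @up s h hs ih =>
      intro ts stk w0 hw0 hlen
      simp only [bld, List.reverse_cons, List.append_assoc, List.singleton_append]
      apply ih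
      · rw [reduce_cons, hw0]
        cases stk with
        | nil => rfl
        | cons y ys =>
            simp only [redStep, List.headI]
            apply if_neg
            intro hc
            exact inv3_ne (linv y) (ts.headI) ((linv_swap _ _).mp hc)
      · simpa using hlen
  | @down s h hs ih =>
      intro ts stk w0 hw0 hlen
      cases stk with
      | nil => simp at hlen
      | cons y ys =>
          simp only [bld, List.reverse_cons, List.append_assoc, List.singleton_append]
          apply ih
          · rw [reduce_cons, hw0]
            simp only [redStep, List.headI, List.tail_cons]
            exact if_pos (linv_linv y).symm
          · simpa using hlen

open DyckStep in
lemma bld_inj : ∀ (s s' : List DyckStep) (ts ts' : List (Fin 3)) (stk : List A) (h : ℕ),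
    Ok s h → Ok s' h → stk.length = h →
    ts.length = s.count U → ts'.length = s'.count U →
    bld s ts stk = bld s' ts' stk → s = s' ∧ ts = ts' := by
  intro s
  induction s with
  | nil =>
      intro s' ts ts' stk h hok hok' hlen hts hts' heq
      cases s' with
      | nil =>
          refine ⟨rfl, ?_⟩
          simp [List.count_nil] at hts hts'
          rw [hts, hts']
      | cons b s' => cases b <;> simp [bld] at heq
  | cons b s ih =>
      intro s' ts ts' stk h hok hok' hlen hts hts' heq
      cases s' with
      | nil => cases b <;> simp [bld] at heq
      | cons b' s'' =>
          cases b <;> cases b'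
          · -- U U
            simp only [bld, List.cons.injEq] at heq
            obtain ⟨hx, hrest⟩ := heq
            have hlab : ts.headI = ts'.headI := inv3_inj _ _ _ hx
            cases hok with
            | up hs =>
              cases hok' with
              | up hs' =>
                  have hts0 : ts ≠ [] := by
                    intro hnil; rw [hnil] at hts; simp [List.count_cons] at hts
                  have hts0' : ts' ≠ [] := by
                    intro hnil; rw [hnil] at hts'; simp [List.count_cons] at hts'
                  rw [hlab] at hrest
                  obtain ⟨hseq, hteq⟩ := ih s'' ts.tail ts'.tail _ (h + 1) hs hs'
                    (by simp [hlen]) (by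
                      cases ts with
                      | nil => exact absurd rfl hts0
                      | cons a as => simp [List.count_cons] at hts ⊢; omega)
                    (by
                      cases ts' with
                      | nil => exact absurd rfl hts0'
                      | cons a as => simp [List.count_cons] at hts' ⊢; omega)
                    hrest
                  refine ⟨by rw [hseq], ?_⟩
                  cases ts with
                  | nil => exact absurd rfl hts0
                  | cons a as =>
                      cases ts' with
                      | nil => exact absurd rfl hts0'
                      | cons a' as' =>
                          simp only [List.headI] at hlab
                          simp only [List.tail_cons] at hteq
                          rw [hlab, hteq]
          · -- U D : impossible since letters differ
            cases hok' with
            | down hs' =>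
                cases stk with
                | nil => simp at hlen
                | cons y ys =>
                    simp only [bld, List.cons.injEq, List.headI] at heq
                    exact absurd heq.1 (inv3_ne (linv y) ts.headI)
          · -- D U
            cases hok with
            | down hs =>
                cases stk with
                | nil => simp at hlen
                | cons y ys =>
                    simp only [bld, List.cons.injEq, List.headI] at heq
                    exact absurd heq.1.symm (inv3_ne (linv y) ts'.headI)
          · -- D D
            cases hok with
            | down hs =>
              cases hok' with
              | down hs' =>
                  cases stk with
                  | nil => simp at hlen
                  | cons y ys =>
                      simp only [bld, List.cons.injEq, List.headI, List.tail_cons] at heq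
                      obtain ⟨hseq, hteq⟩ := ih s'' ts ts' ys _ hs hs'
                        (by simpa using hlen)
                        (by simpa [List.count_cons] using hts)
                        (by simpa [List.count_cons] using hts')
                        heq.2
                      exact ⟨by rw [hseq], hteq⟩

/-! ### packaging the lower bound -/

lemma ok_of_counts : ∀ (s : List DyckStep) (h : ℕ),
    s.count DyckStep.D = h + s.count DyckStep.U →
    (∀ i, (s.take i).count DyckStep.D ≤ h + (s.take i).count DyckStep.U) →
    Ok s h := by
  intro s
  induction s with
  | nil =>
      intro h hbal _
      simp at hbal
      rw [← hbal]
      exact Ok.nil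
  | cons b s ih =>
      intro h hbal hpre
      cases b with
      | U =>
          apply Ok.up
          apply ih
          · simp [List.count_cons] at hbal ⊢; omega
          · intro i
            have := hpre (i + 1)
            simp [List.take_succ_cons, List.count_cons] at this ⊢
            omega
      | D =>
          have h1 : 1 ≤ h := by
            have := hpre 1
            simpa [List.count_cons] using this
          cases h with
          | zero => omega
          | succ h' =>
              apply Ok.down
              apply ih
              · simp [List.count_cons] at hbal ⊢; omega
              · intro i
                have := hpre (i + 1)
                simp [List.take_succ_cons, List.count_cons] at this ⊢
                omega

lemma ok_of_dyck (p : DyckWord) : Ok p.toList 0 := by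
  apply ok_of_counts
  · simpa using p.count_U_eq_count_D.symm
  · intro i
    simpa using p.count_D_le_count_U i

lemma ofFn_get_cast {α : Type*} (l : List α) (n : ℕ) (h : l.length = n) :
    List.ofFn (fun i : Fin n => l.get (Fin.cast h.symm i)) = l := by
  subst h
  simpa using List.ofFn_get l

instance trivSub_finite (n : ℕ) : Finite (trivSub n) := by
  apply Finite.of_injective
    (fun l : trivSub n => (fun i : Fin n => l.1.get (Fin.cast l.2.1.symm i)))
  intro a b h
  apply Subtype.ext
  rw [← ofFn_get_cast a.1 n a.2.1, ← ofFn_get_cast b.1 n b.2.1]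
  exact congrArg List.ofFn h

def packL (n : ℕ) (q : {p : DyckWord // p.semilength = n} × List.Vector (Fin 3) n) :
    trivSub (2 * n) :=
  ⟨(bld q.1.1.toList q.2.toList []).reverse, by
      rw [List.length_reverse, bld_length, ← DyckWord.two_mul_semilength_eq_length, q.1.2], by
      have := bld_reduce q.1.1.toList 0 (ok_of_dyck q.1.1) q.2.toList [] [] rfl rfl
      simpa using this⟩

lemma packL_injective (n : ℕ) : Function.Injective (packL n) := by
  rintro ⟨⟨p, hp⟩, ts⟩ ⟨⟨p', hp'⟩, ts'⟩ h
  have heq : bld p.toList ts.toList [] = bld p'.toList ts'.toList [] := by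
    have := congrArg Subtype.val h
    simp only [packL] at this
    exact List.reverse_injective this
  obtain ⟨hs, ht⟩ := bld_inj p.toList p'.toList ts.toList ts'.toList [] 0
    (ok_of_dyck p) (ok_of_dyck p') rfl
    (by rw [List.Vector.toList_length, ← hp]; rfl)
    (by rw [List.Vector.toList_length, ← hp']; rfl)
    heq
  have h1 : p = p' := DyckWord.ext hs
  have h2 : ts = ts' := Subtype.ext ht
  subst h1
  rw [Prod.mk.injEq, Subtype.mk.injEq]
  exact ⟨rfl, h2⟩

lemma lower_bound (n : ℕ) : catalan n * 3 ^ n ≤ Nat.card (trivSub (2 * n)) := by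
  classical
  have hinj := Nat.card_le_card_of_injective (packL n) (packL_injective n)
  have hcard : Nat.card ({p : DyckWord // p.semilength = n} × List.Vector (Fin 3) n)
      = catalan n * 3 ^ n := by
    rw [Nat.card_eq_fintype_card, Fintype.card_prod,
      DyckWord.card_dyckWord_semilength_eq_catalan, card_vector]
    simp
  rw [← hcard]
  exact hinj

/-! ### relating `f2TrivialCount` to `trivSub` -/

lemma f2Letter_eq (p : A) : f2Letter p = FreeGroup.mk [linv p] := by
  cases p with
  | mk a b =>
      cases b with
      | false => simp [f2Letter, FreeGroup.of, linv]
      | true =>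
          simp only [f2Letter, FreeGroup.of, linv]
          rw [FreeGroup.inv_mk]
          simp [FreeGroup.invRev]

lemma map_mk_prod : ∀ l : List A, (l.map fun p => FreeGroup.mk [p]).prod = FreeGroup.mk l := by
  intro l
  induction l with
  | nil => simp [FreeGroup.one_eq_mk]
  | cons x l ih => simp [ih, FreeGroup.mul_mk]

lemma key_rewrite {n : ℕ} (w : Fin n → A) :
    ((List.ofFn fun i => f2Letter (w i)).prod = 1)
      ↔ FreeGroup.reduce (List.ofFn fun i => linv (w i)) = [] := by
  have h1 : (List.ofFn fun i => f2Letter (w i))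
      = (List.ofFn fun i => linv (w i)).map (fun p => FreeGroup.mk [p]) := by
    rw [List.map_ofFn]
    apply congrArg List.ofFn
    funext i
    simp [f2Letter_eq, Function.comp]
  rw [h1, map_mk_prod, ← FreeGroup.toWord_eq_nil_iff, FreeGroup.toWord_mk]

def eqv (n : ℕ) :
    {w : Fin n → A // (List.ofFn fun i => f2Letter (w i)).prod = 1} ≃ trivSub n where
  toFun w := ⟨List.ofFn fun i => linv (w.1 i), by simp, by
      have := (key_rewrite w.1).mp w.2
      exact this⟩
  invFun l := ⟨fun i => linv (l.1.get (Fin.cast l.2.1.symm i)), by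
      rw [key_rewrite]
      have : (List.ofFn fun i => linv (linv (l.1.get (Fin.cast l.2.1.symm i)))) = l.1 := by
        have e : (fun i : Fin n => linv (linv (l.1.get (Fin.cast l.2.1.symm i))))
            = fun i : Fin n => l.1.get (Fin.cast l.2.1.symm i) := by
          funext i; rw [linv_linv]
        rw [e]
        exact ofFn_get_cast l.1 n l.2.1
      rw [this]
      exact l.2.2⟩
  left_inv w := by
    apply Subtype.ext
    funext i
    simp [linv_linv]
  right_inv l := by
    apply Subtype.ext
    simp only [linv_linv]
    exact ofFn_get_cast l.1 n l.2.1

lemma count_eq (n : ℕ) : f2TrivialCount n = Nat.card (trivSub n) :=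
  Nat.card_congr (eqv n)


/-! ### parity -/

lemma reduce_parity (l : List A) : (FreeGroup.reduce l).length % 2 = l.length % 2 := by
  induction l with
  | nil => rfl
  | cons x v ih =>
      rw [reduce_cons]
      cases h : FreeGroup.reduce v with
      | nil =>
          rw [h] at ih
          simp only [redStep, List.length_cons, List.length_nil, List.length_singleton] at *
          omega
      | cons y ys =>
          rw [h] at ih
          simp only [redStep, List.length_cons] at *
          by_cases hc : y = linv x
          · rw [if_pos hc]
            omega
          · rw [if_neg hc]
            simp only [List.length_cons]
            omega

lemma count_odd (m : ℕ) : f2TrivialCount (2 * m + 1) = 0 := by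
  rw [count_eq]
  have : IsEmpty (trivSub (2 * m + 1)) := by
    constructor
    rintro ⟨l, hl, hr⟩
    have := reduce_parity l
    rw [hr, hl] at this
    simp at this
  exact Nat.card_of_isEmpty

/-! ### analysis -/

noncomputable def rr : ℝ≥0∞ := (12 : ℝ≥0∞) ^ ((1:ℝ)/2)

lemma rr_ne_top : rr ≠ ⊤ := by
  rw [rr]
  exact ENNReal.rpow_ne_top_of_nonneg (by norm_num) (by norm_num)

lemma one_le_rr : (1 : ℝ≥0∞) ≤ rr := by
  rw [rr, ← ENNReal.one_rpow ((1:ℝ)/2)]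
  exact ENNReal.rpow_le_rpow (by norm_num) (by norm_num)

lemma rho_eq : ENNReal.ofReal (2 * Real.sqrt 3) = rr := by
  have h12 : (2:ℝ) * Real.sqrt 3 = (12:ℝ) ^ ((1:ℝ)/2) := by
    rw [← Real.sqrt_eq_rpow]
    rw [show (12:ℝ) = 2^2 * 3 by norm_num, Real.sqrt_mul (by positivity),
      Real.sqrt_sq (by norm_num)]
  rw [h12, ← ENNReal.ofReal_rpow_of_pos (by norm_num), rr]
  norm_num

lemma count_upper' (m : ℕ) : f2TrivialCount (2 * m) ≤ 3 * 12 ^ m := by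
  rw [count_eq]; exact upper_bound m

lemma count_lower' (m : ℕ) : catalan m * 3 ^ m ≤ f2TrivialCount (2 * m) := by
  rw [count_eq]; exact lower_bound m

lemma nat_low (m : ℕ) : 12 ^ m ≤ 2 * (m+1) * (m+1) * f2TrivialCount (2 * m) := by
  have hc := count_lower' m
  rcases Nat.eq_zero_or_pos m with rfl | hm
  · simp [catalan] at hc ⊢
    omega
  · have h1 : 4 ^ m ≤ 2 * m * Nat.centralBinom m :=
      Nat.four_pow_le_two_mul_self_mul_centralBinom m hm
    have h2 : (m + 1) * catalan m = Nat.centralBinom m :=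
      succ_mul_catalan_eq_centralBinom m
    calc 12 ^ m = 4 ^ m * 3 ^ m := by rw [← mul_pow]; norm_num
      _ ≤ (2 * m * Nat.centralBinom m) * 3 ^ m := Nat.mul_le_mul_right _ h1
      _ = (2 * m * ((m+1) * catalan m)) * 3 ^ m := by rw [h2]
      _ = (2 * m * (m+1)) * (catalan m * 3 ^ m) := by ring
      _ ≤ (2 * (m+1) * (m+1)) * (catalan m * 3 ^ m) := by
          apply Nat.mul_le_mul_right
          have : 2 * m ≤ 2 * (m + 1) := by omega
          exact Nat.mul_le_mul_right _ this
      _ ≤ (2 * (m+1) * (m+1)) * f2TrivialCount (2 * m) := Nat.mul_le_mul_left _ hc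

/-- the `m`-th root factor for the lower bound -/
noncomputable def vv (m : ℕ) : ℝ≥0∞ :=
  ((2 * (m+1) * (m+1) : ℕ) : ℝ≥0∞) ^ (1 / ((2 * m : ℕ) : ℝ))

lemma twelve_pow_root (m : ℕ) (hm : 0 < m) :
    ((12 : ℝ≥0∞) ^ m) ^ (1 / ((2 * m : ℕ) : ℝ)) = rr := by
  rw [← ENNReal.rpow_natCast (12 : ℝ≥0∞) m, ← ENNReal.rpow_mul, rr]
  congr 1
  have hm' : (m : ℝ) ≠ 0 := Nat.cast_ne_zero.mpr (by omega)
  push_cast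
  field_simp

lemma f_upper (n : ℕ) :
    ((f2TrivialCount n : ℝ≥0∞)) ^ (1 / (n : ℝ))
      ≤ (3 : ℝ≥0∞) ^ (1 / (n : ℝ)) * rr := by
  rcases Nat.even_or_odd n with he | ho
  · obtain ⟨m, rfl⟩ := he
    rw [show m + m = 2 * m from (two_mul m).symm]
    rcases Nat.eq_zero_or_pos m with rfl | hm
    · norm_num
      exact one_le_rr
    · have hb : ((f2TrivialCount (2*m) : ℕ) : ℝ≥0∞) ≤ ((3 * 12 ^ m : ℕ) : ℝ≥0∞) :=
        Nat.cast_le.mpr (count_upper' m)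
      calc ((f2TrivialCount (2*m) : ℝ≥0∞)) ^ (1 / ((2*m : ℕ) : ℝ))
          ≤ (((3 * 12 ^ m : ℕ) : ℝ≥0∞)) ^ (1 / ((2*m : ℕ) : ℝ)) :=
            ENNReal.rpow_le_rpow hb (by positivity)
        _ = ((3 : ℝ≥0∞) * (12 : ℝ≥0∞) ^ m) ^ (1 / ((2*m : ℕ) : ℝ)) := by push_cast; rfl
        _ = (3 : ℝ≥0∞) ^ (1 / ((2*m : ℕ) : ℝ)) * ((12 : ℝ≥0∞) ^ m) ^ (1 / ((2*m : ℕ) : ℝ)) := by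
            apply ENNReal.mul_rpow_of_ne_top (by norm_num)
            exact ENNReal.pow_ne_top (by norm_num)
        _ = (3 : ℝ≥0∞) ^ (1 / ((2*m : ℕ) : ℝ)) * rr := by rw [twelve_pow_root m hm]
  · obtain ⟨m, rfl⟩ := ho
    rw [count_odd m]
    have : ((0 : ℕ) : ℝ≥0∞) ^ (1 / ((2*m+1 : ℕ) : ℝ)) = 0 := by
      rw [Nat.cast_zero]
      apply ENNReal.zero_rpow_of_pos
      have : (0:ℝ) < ((2*m+1 : ℕ) : ℝ) := by positivity
      positivity
    rw [this]
    exact zero_le'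

lemma rr_le_mul (m : ℕ) (hm : 0 < m) :
    rr ≤ vv m * ((f2TrivialCount (2 * m) : ℝ≥0∞)) ^ (1 / ((2 * m : ℕ) : ℝ)) := by
  have hb : ((12 ^ m : ℕ) : ℝ≥0∞)
      ≤ (((2 * (m+1) * (m+1)) * f2TrivialCount (2 * m) : ℕ) : ℝ≥0∞) :=
    Nat.cast_le.mpr (nat_low m)
  have h1 := ENNReal.rpow_le_rpow (z := 1 / ((2*m:ℕ):ℝ)) hb (by positivity)
  rw [Nat.cast_mul (2*(m+1)*(m+1)) (f2TrivialCount (2*m))] at h1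
  rw [ENNReal.mul_rpow_of_ne_top (ENNReal.natCast_ne_top _) (ENNReal.natCast_ne_top _)] at h1
  calc rr = (((12 ^ m : ℕ) : ℝ≥0∞)) ^ (1 / ((2*m : ℕ) : ℝ)) := by
        rw [show ((12 ^ m : ℕ) : ℝ≥0∞) = (12 : ℝ≥0∞) ^ m by push_cast; rfl,
          twelve_pow_root m hm]
    _ ≤ _ := h1

/-- general tool : `ofReal g ^ e → 1` when `log g * e → 0` -/
lemma rpow_tendsto_one (g : ℕ → ℝ) (e : ℕ → ℝ) (hg : ∀ m, 0 < g m)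
    (h : Tendsto (fun m => Real.log (g m) * e m) atTop (𝓝 0)) :
    Tendsto (fun m => ENNReal.ofReal (g m) ^ (e m)) atTop (𝓝 1) := by
  have hrw : (fun m => ENNReal.ofReal (g m) ^ (e m))
      = fun m => ENNReal.ofReal (Real.exp (Real.log (g m) * e m)) := by
    funext m
    rw [ENNReal.ofReal_rpow_of_pos (hg m), Real.rpow_def_of_pos (hg m)]
  rw [hrw]
  have h2 : Tendsto (fun m => Real.exp (Real.log (g m) * e m)) atTop (𝓝 1) := by
    have := (Real.continuous_exp.tendsto 0).comp h
    simpa [Function.comp_def] using this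
  have := (ENNReal.continuous_ofReal.tendsto 1).comp h2
  simpa [Function.comp_def] using this

lemma tendsto_three : Tendsto (fun n : ℕ => (3 : ℝ≥0∞) ^ (1 / (n : ℝ))) atTop (𝓝 1) := by
  have h := rpow_tendsto_one (fun _ => (3:ℝ)) (fun n => 1 / (n:ℝ)) (fun _ => by norm_num)
    (by
      have h0 : Tendsto (fun n : ℕ => 1 / (n:ℝ)) atTop (𝓝 0) :=
        tendsto_one_div_atTop_nhds_zero_nat
      simpa using h0.const_mul (Real.log 3))
  have : (fun n : ℕ => (3 : ℝ≥0∞) ^ (1 / (n : ℝ)))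
      = fun n : ℕ => ENNReal.ofReal ((3:ℝ)) ^ (1 / (n:ℝ)) := by
    norm_num
  rw [this]
  exact h

lemma log_div_aux : Tendsto (fun m : ℕ => Real.log ((m:ℝ)+1) / ((m:ℝ)+1)) atTop (𝓝 0) := by
  have h := Real.tendsto_pow_log_div_mul_add_atTop 1 0 1 one_ne_zero
  have h2 : Tendsto (fun m : ℕ => ((m:ℝ) + 1)) atTop atTop := by
    apply Filter.tendsto_atTop_add_const_right
    exact tendsto_natCast_atTop_atTop
  have := h.comp h2
  simpa [Function.comp_def] using this

lemma tendsto_vv : Tendsto vv atTop (𝓝 1) := by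
  have key : Tendsto (fun m : ℕ =>
      Real.log ((2 * (m+1) * (m+1) : ℕ) : ℝ) * (1 / ((2 * m : ℕ) : ℝ))) atTop (𝓝 0) := by
    have hcast : ∀ m : ℕ, Real.log ((2 * (m+1) * (m+1) : ℕ) : ℝ)
        = Real.log 2 + Real.log ((m:ℝ)+1) + Real.log ((m:ℝ)+1) := by
      intro m
      push_cast
      rw [Real.log_mul (by positivity) (by positivity), Real.log_mul (by positivity) (by positivity)]
    simp_rw [hcast]
    have h2 : ∀ m : ℕ, (Real.log 2 + Real.log ((m:ℝ)+1) + Real.log ((m:ℝ)+1)) * (1 / ((2*m:ℕ):ℝ))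
        = Real.log 2 * (1 / ((2*m:ℕ):ℝ)) + Real.log ((m:ℝ)+1) * (1 / ((2*m:ℕ):ℝ))
          + Real.log ((m:ℝ)+1) * (1 / ((2*m:ℕ):ℝ)) := by
      intro m; ring
    simp_rw [h2]
    have hA : Tendsto (fun m : ℕ => Real.log 2 * (1 / ((2*m:ℕ):ℝ))) atTop (𝓝 0) := by
      have h0 : Tendsto (fun m : ℕ => 1 / ((2*m:ℕ):ℝ)) atTop (𝓝 0) := by
        apply Tendsto.comp tendsto_one_div_atTop_nhds_zero_nat
        exact Filter.tendsto_atTop_atTop_of_monotone (fun a b hab => by omega) (fun b => ⟨b, by omega⟩)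
      simpa using h0.const_mul (Real.log 2)
    have hB : Tendsto (fun m : ℕ => Real.log ((m:ℝ)+1) * (1 / ((2*m:ℕ):ℝ))) atTop (𝓝 0) := by
      apply tendsto_of_tendsto_of_tendsto_of_le_of_le' tendsto_const_nhds log_div_aux
      · filter_upwards [Filter.eventually_ge_atTop 1] with m hm
        have hm' : (1:ℝ) ≤ (m:ℝ) := by exact_mod_cast hm
        have : (0:ℝ) ≤ Real.log ((m:ℝ)+1) := Real.log_nonneg (by linarith)
        positivity
      · filter_upwards [Filter.eventually_ge_atTop 1] with m hm
        have hm' : (1:ℝ) ≤ (m:ℝ) := Nat.one_le_cast.mpr hm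
        have hlog : (0:ℝ) ≤ Real.log ((m:ℝ)+1) := Real.log_nonneg (by linarith)
        have hle : 1 / ((2*m:ℕ):ℝ) ≤ 1 / ((m:ℝ)+1) := by
          apply one_div_le_one_div_of_le (by linarith)
          push_cast
          linarith
        calc Real.log ((m:ℝ)+1) * (1 / ((2*m:ℕ):ℝ))
            ≤ Real.log ((m:ℝ)+1) * (1 / ((m:ℝ)+1)) := by
              exact mul_le_mul_of_nonneg_left hle hlog
          _ = Real.log ((m:ℝ)+1) / ((m:ℝ)+1) := by ring
    have := (hA.add hB).add hB
    simpa using this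
  have h := rpow_tendsto_one (fun m => ((2 * (m+1) * (m+1) : ℕ) : ℝ))
    (fun m => 1 / ((2 * m : ℕ) : ℝ)) (fun m => by positivity) key
  have heq : vv = fun m : ℕ =>
      ENNReal.ofReal (((2 * (m+1) * (m+1) : ℕ) : ℝ)) ^ (1 / ((2 * m : ℕ) : ℝ)) := by
    funext m
    rw [vv, ENNReal.ofReal_natCast]
  rw [heq]
  exact h

lemma limsup_le_rr :
    Filter.limsup (fun n : ℕ => ((f2TrivialCount n : ℝ≥0∞)) ^ (1 / (n : ℝ))) atTop ≤ rr := by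
  have hg : Tendsto (fun n : ℕ => (3 : ℝ≥0∞) ^ (1 / (n : ℝ)) * rr) atTop (𝓝 rr) := by
    have := ENNReal.Tendsto.mul_const tendsto_three (Or.inr rr_ne_top)
    simpa using this
  calc Filter.limsup (fun n : ℕ => ((f2TrivialCount n : ℝ≥0∞)) ^ (1 / (n : ℝ))) atTop
      ≤ Filter.limsup (fun n : ℕ => (3 : ℝ≥0∞) ^ (1 / (n : ℝ)) * rr) atTop :=
        Filter.limsup_le_limsup (Filter.Eventually.of_forall f_upper)
    _ = rr := hg.limsup_eq

lemma rr_le_limsup :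
    rr ≤ Filter.limsup (fun n : ℕ => ((f2TrivialCount n : ℝ≥0∞)) ^ (1 / (n : ℝ))) atTop := by
  set f : ℕ → ℝ≥0∞ := fun n => ((f2TrivialCount n : ℝ≥0∞)) ^ (1 / (n : ℝ)) with hf
  by_contra hlt
  push_neg at hlt
  obtain ⟨a, ha1, ha2⟩ := exists_between hlt
  have haL : a ≤ Filter.limsup f atTop := by
    apply le_limsup_of_frequently_le'
    have hmul : Tendsto (fun m => vv m * a) atTop (𝓝 (1 * a)) :=
      ENNReal.Tendsto.mul_const tendsto_vv (Or.inl one_ne_zero)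
    rw [one_mul] at hmul
    have hev : ∀ᶠ m in atTop, vv m * a < rr := hmul.eventually_lt_const ha2
    have hev2 : ∀ᶠ m in atTop, a ≤ f (2 * m) := by
      filter_upwards [hev, Filter.eventually_ge_atTop 1] with m h1 h2
      by_contra hfa
      push_neg at hfa
      have : vv m * f (2 * m) ≤ vv m * a := by gcongr
      have hcon := lt_of_le_of_lt (le_trans (rr_le_mul m h2) this) h1
      exact lt_irrefl _ hcon
    have h2m : Tendsto (fun m : ℕ => 2 * m) atTop atTop :=
      Filter.tendsto_atTop_atTop_of_monotone (fun x y hxy => by omega) (fun b => ⟨b, by omega⟩)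
    exact h2m.frequently hev2.frequently
  exact absurd haL (not_le.mpr ha1)

end F2G


/-- For the free group on two generators with the standard generating set,
the growth rate of trivial words is `ρ = limsup rₙ^(1/n) = 2√3`. -/
theorem stmt16 :
    Filter.limsup (fun n : ℕ => ((f2TrivialCount n : ℝ≥0∞)) ^ (1 / (n : ℝ))) atTop
      = ENNReal.ofReal (2 * Real.sqrt 3) := by
  rw [F2G.rho_eq]
  exact le_antisymm F2G.limsup_le_rr F2G.rr_le_limsup
end
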